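/- arXiv:2309.02820 — 2 statements merged into one kernel-verified Lean document; each statement's English description precedes it below -/
import Mathlib

section
/- Let a 3-CNF formula over n Boolean variables be given by m clauses, where clause j consists of three literals encoded by variable indices i_{j,1}, i_{j,2}, i_{j,3} ∈ {0,...,n-1} and signs s_{j,1}, s_{j,2}, s_{j,3} ∈ {-1,1}. If there exists a truth assignment t : {0,...,n-1} → Bool satisfying every clause (i.e., for each j there is some k with the literal true: s_{j,k} = 1 and t(i_{j,k}) = true, or s_{j,k} = -1 and t(i_{j,k}) = false), then defining x_i = -1 if t(i) = true and x_i = 1 otherwise, every gadget value max(s_{j,1}·x_{i_{j,1}} + s_{j,2}·x_{i_{j,2}} + s_{j,3}·x_{i_{j,3}} - 2, 0) equals 0. (Completeness claim of the Theorem 2 reduction: a satisfying assignment makes all clause neurons output 0, so the constructed network attains the target representation x_r on the clause coordinates.) -/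
/-- Completeness claim of the Theorem 2 reduction: a satisfying assignment
makes every clause neuron output 0. -/
theorem reduction_completeness (n m : ℕ)
    (idx : Fin m → Fin 3 → Fin n) (s : Fin m → Fin 3 → ℝ)
    (hs : ∀ j k, s j k = -1 ∨ s j k = 1)
    (t : Fin n → Bool)
    (hsat : ∀ j : Fin m, ∃ k : Fin 3,
      (s j k = 1 ∧ t (idx j k) = true) ∨ (s j k = -1 ∧ t (idx j k) = false))
    (x : Fin n → ℝ) (hx : ∀ i, x i = if t i then (-1 : ℝ) else 1) :
    ∀ j : Fin m, max (∑ k : Fin 3, s j k * x (idx j k) - 2) 0 = 0 := by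
  intro j
  have hle : ∀ k : Fin 3, s j k * x (idx j k) ≤ 1 := by
    intro k
    rcases hs j k with h | h <;> rw [h, hx] <;> by_cases ht : t (idx j k) <;>
      simp [ht]
  have hwit : ∃ k : Fin 3, s j k * x (idx j k) = -1 := by
    obtain ⟨k, hk | hk⟩ := hsat j <;> exact ⟨k, by rw [hk.1, hx, hk.2]; norm_num⟩
  obtain ⟨k, hk⟩ := hwit
  have hsum : ∑ k : Fin 3, s j k * x (idx j k) ≤ 2 := by
    fin_cases k <;> rw [Fin.sum_univ_three] <;>
      [ (have := hle 1; have := hle 2);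
        (have := hle 0; have := hle 2);
        (have := hle 0; have := hle 1) ] <;>
      simp only [show (⟨0,by norm_num⟩ : Fin 3) = 0 from rfl,
        show (⟨1,by norm_num⟩ : Fin 3) = 1 from rfl,
        show (⟨2,by norm_num⟩ : Fin 3) = 2 from rfl] at hk <;> linarith
  have : ∑ k : Fin 3, s j k * x (idx j k) - 2 ≤ 0 := by linarith
  exact max_eq_right this
end

section
/- Let a 3-CNF formula over n Boolean variables be given by m ≥ 1 clauses, where clause j consists of three literals encoded by variable indices and signs s_{j,k} ∈ {-1,1}, and suppose n ≤ 3·m and that Q ≥ 15000 is a real number. Let x ∈ {-1,1}^n and let g_j(x) = max(s_{j,1}·x_{i_{j,1}} + s_{j,2}·x_{i_{j,2}} + s_{j,3}·x_{i_{j,3}} - 2, 0) be the clause gadget values. If Σ_{j=1}^m g_j(x)² ≤ (1/(3600·Q²))·(m + 100·Q²·n), then the truth assignment defined by t(i) = true iff x_i = -1 satisfies at least (7/8 + 5/√Q)·m of the clauses. (Soundness claim of the Theorem 2 reduction in the binary case: an approximate preimage of the target representation yields an assignment satisfying more than a (7/8 + 5/√Q) fraction of clauses.) -/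
open Classical in
/-- Soundness claim of the Theorem 2 reduction (binary case): an approximate
preimage yields an assignment satisfying at least a `(7/8 + 5/√Q)` fraction of
the clauses.  (The assignment is `t i = true` iff `x i = -1`, so a literal with
sign `s` at variable `i` is true iff `s = 1 ∧ x i = -1` or `s = -1 ∧ x i = 1`.) -/
theorem reduction_soundness_binary (n m : ℕ) (hm : 1 ≤ m) (hnm : n ≤ 3 * m)
    (Q : ℝ) (hQ : 15000 ≤ Q)
    (idx : Fin m → Fin 3 → Fin n) (s : Fin m → Fin 3 → ℝ)
    (hs : ∀ j k, s j k = -1 ∨ s j k = 1)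
    (x : Fin n → ℝ) (hx : ∀ i, x i = -1 ∨ x i = 1)
    (g : Fin m → ℝ)
    (hg : ∀ j, g j = max (∑ k : Fin 3, s j k * x (idx j k) - 2) 0)
    (happrox : ∑ j : Fin m, (g j) ^ 2 ≤
      (1 / (3600 * Q ^ 2)) * ((m : ℝ) + 100 * Q ^ 2 * (n : ℝ))) :
    (7 / 8 + 5 / Real.sqrt Q) * (m : ℝ) ≤
      ((Finset.univ.filter (fun j : Fin m => ∃ k : Fin 3,
          (s j k = 1 ∧ x (idx j k) = -1) ∨
            (s j k = -1 ∧ x (idx j k) = 1))).card : ℝ) := by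
  classical
  set S := Finset.univ.filter (fun j : Fin m => ∃ k : Fin 3,
      (s j k = 1 ∧ x (idx j k) = -1) ∨ (s j k = -1 ∧ x (idx j k) = 1)) with hS
  have hQ0 : (0:ℝ) < Q := by linarith
  have hunsat : ∀ j, j ∉ S → g j = 1 := by
    intro j hj
    simp only [hS, Finset.mem_filter, Finset.mem_univ, true_and, not_exists] at hj
    have hprod : ∀ k : Fin 3, s j k * x (idx j k) = 1 := by
      intro k
      have h := hj k
      rcases hs j k with h1 | h1 <;> rcases hx (idx j k) with h2 | h2 <;>
        simp [h1, h2] at h ⊢ <;> norm_num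
    rw [hg j, Fin.sum_univ_three, hprod 0, hprod 1, hprod 2]
    norm_num
  have hcardle : S.card ≤ m := by
    simpa using Finset.card_le_univ S
  have hcompl : ∑ j ∈ Sᶜ, g j ^ 2 = ((m : ℝ) - S.card) := by
    rw [Finset.sum_congr rfl (fun j hj => by
      rw [hunsat j (Finset.mem_compl.mp hj)])]
    rw [Finset.sum_const, Finset.card_compl]
    simp [Nat.cast_sub hcardle]
  have hcard : ((m : ℝ) - S.card) ≤ ∑ j : Fin m, g j ^ 2 := by
    have hsplit : ∑ j : Fin m, g j ^ 2 = ∑ j ∈ S, g j ^ 2 + ∑ j ∈ Sᶜ, g j ^ 2 :=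
      (Finset.sum_add_sum_compl S _).symm
    have hpos : (0:ℝ) ≤ ∑ j ∈ S, g j ^ 2 :=
      Finset.sum_nonneg (fun j _ => sq_nonneg _)
    rw [hsplit, hcompl]
    linarith
  -- bound the RHS of happrox
  have hsq : (122 : ℝ) ≤ Real.sqrt Q := by
    nlinarith [Real.sq_sqrt hQ0.le, Real.sqrt_nonneg Q]
  have hB : (1 / (3600 * Q ^ 2)) * ((m : ℝ) + 100 * Q ^ 2 * (n : ℝ))
      = (m : ℝ) / (3600 * Q ^ 2) + (n : ℝ) / 36 := by
    field_simp
    ring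
  have hm0 : (0:ℝ) ≤ (m:ℝ) := Nat.cast_nonneg m
  have hn3m : (n : ℝ) ≤ 3 * m := by exact_mod_cast hnm
  have hQ2 : (3600 : ℝ) * 15000 ^ 2 ≤ 3600 * Q ^ 2 := by nlinarith
  have h1 : (m : ℝ) / (3600 * Q ^ 2) ≤ (m : ℝ) / (3600 * 15000 ^ 2) :=
    div_le_div_of_nonneg_left hm0 (by norm_num) hQ2
  have h2 : 5 / Real.sqrt Q * (m : ℝ) ≤ 5 / 122 * (m : ℝ) := by
    have := div_le_div_of_nonneg_left (by norm_num : (0:ℝ) ≤ 5) (by norm_num : (0:ℝ) < 122) hsq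
    nlinarith
  have hbound : ∑ j : Fin m, g j ^ 2 ≤
      (m : ℝ) / (3600 * 15000 ^ 2) + (m : ℝ) / 12 := by
    rw [hB] at happrox
    linarith
  have hScard : (m : ℝ) - ((m : ℝ) / (3600 * 15000 ^ 2) + (m : ℝ) / 12) ≤ S.card := by
    linarith
  have : (7 / 8 + 5 / Real.sqrt Q) * (m : ℝ) ≤
      (m : ℝ) - ((m : ℝ) / (3600 * 15000 ^ 2) + (m : ℝ) / 12) := by
    have expand : (7 / 8 + 5 / Real.sqrt Q) * (m : ℝ)
        = 7 / 8 * m + 5 / Real.sqrt Q * m := by ring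
    rw [expand]
    nlinarith
  linarith
end
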